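/- There is a universal constant c₀ > 0 such that the following holds. For every finite simple graph H on n' ≥ 1 vertices and all natural numbers n ≤ M with n ≥ 1 and M ≥ 4, there exist a finite certificate set C with |C| ≤ 2^(c₀ · (n · log₂(n' + 1) + log₂(log₂ M) + 1)) and a verification algorithm A : Fin M → Finset (Fin M) → C → Bool such that for every finite simple graph G on a vertex set V with |V| = n and every injective identifier assignment Id : V → Fin M: there exists c ∈ C with A (Id u) ({Id v : v ∈ N(u)}) c = true for every vertex u ∈ V, if and only if there exists a graph homomorphism from G to H. -/

import Mathlib

-- (q+1)^q ≥ 2 q^q for q ≥ 1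
lemma two_mul_pow_le {q : ℕ} (hq : 1 ≤ q) : 2 * q ^ q ≤ (q + 1) ^ q := by
  have hq' : (0:ℝ) < (q:ℝ) := by exact_mod_cast hq
  have h1 : (2:ℝ) * (q:ℝ) ^ q ≤ ((q:ℝ) + 1) ^ q := by
    have h2 : (1:ℝ) + (q:ℕ) * (1/(q:ℝ)) ≤ (1 + 1/(q:ℝ)) ^ (q:ℕ) := by
      apply one_add_mul_le_pow
      have : (0:ℝ) ≤ 1/(q:ℝ) := by positivity
      linarith
    have h3 : (1:ℝ) + (q:ℕ) * (1/(q:ℝ)) = 2 := by field_simp; norm_num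
    rw [h3] at h2
    calc (2:ℝ) * (q:ℝ) ^ q ≤ (1 + 1/(q:ℝ)) ^ (q:ℕ) * (q:ℝ) ^ q := by nlinarith [pow_pos hq' q]
    _ = ((1 + 1/(q:ℝ)) * q) ^ q := by rw [mul_pow]
    _ = ((q:ℝ) + 1) ^ q := by congr 1; field_simp
  exact_mod_cast h1

-- key inequality
lemma key_ineq {n M : ℕ} (hn : 1 ≤ n) (hM : 1 ≤ M) :
    M ^ n * (2 ^ n - 1) ^ ((2 ^ n - 1) * n * (Nat.log 2 M + 1)) <
      2 ^ (n * ((2 ^ n - 1) * n * (Nat.log 2 M + 1))) := by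
  set q := 2 ^ n - 1 with hqdef
  set L := Nat.log 2 M + 1 with hLdef
  have hq1 : 1 ≤ q := by
    have : 2 ≤ 2 ^ n := by
      calc 2 = 2 ^ 1 := rfl
      _ ≤ 2 ^ n := Nat.pow_le_pow_right (by norm_num) hn
    omega
  have hq : q + 1 = 2 ^ n := by
    have : 1 ≤ 2 ^ n := Nat.one_le_two_pow
    omega
  have hL1 : 1 ≤ L := by omega
  have hMlt : M < 2 ^ L := Nat.lt_pow_succ_log_self (by norm_num) M
  have hMn : M ^ n < 2 ^ (n * L) := by
    calc M ^ n < (2 ^ L) ^ n := Nat.pow_lt_pow_left hMlt (by omega)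
    _ = 2 ^ (n * L) := by rw [← pow_mul, Nat.mul_comm]
  have hstep : 2 ^ (n * L) * q ^ (q * n * L) ≤ 2 ^ (n * (q * n * L)) := by
    have h1 : (2 * q ^ q) ^ (n * L) ≤ ((q + 1) ^ q) ^ (n * L) :=
      Nat.pow_le_pow_left (two_mul_pow_le hq1) _
    calc 2 ^ (n * L) * q ^ (q * n * L) = (2 * q ^ q) ^ (n * L) := by
          rw [mul_pow, ← pow_mul]; ring_nf
    _ ≤ ((q + 1) ^ q) ^ (n * L) := h1
    _ = 2 ^ (n * (q * n * L)) := by rw [hq, ← pow_mul, ← pow_mul]; ring_nf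
  calc M ^ n * q ^ (q * n * L) < 2 ^ (n * L) * q ^ (q * n * L) :=
        Nat.mul_lt_mul_of_lt_of_le hMn (le_refl _) (Nat.pow_pos (by omega))
  _ ≤ 2 ^ (n * (q * n * L)) := hstep

open Finset

lemma count_injOn {n M : ℕ} (hn : 1 ≤ n) (hnM : n ≤ M) (S : Finset (Fin M))
    (hS : S.card = n) :
    (2 * n) ^ M ≤ 2 ^ n * Fintype.card {f : Fin M → Fin (2 * n) // Set.InjOn f ↑S} := by
  classical
  have hcard : Fintype.card ((↥S ↪ Fin (2 * n)) × (↥(Sᶜ) → Fin (2 * n))) ≤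
      Fintype.card {f : Fin M → Fin (2 * n) // Set.InjOn f ↑S} := by
    have hinj : ∀ (p : (↥S ↪ Fin (2 * n)) × (↥(Sᶜ) → Fin (2 * n))),
        Set.InjOn (fun x : Fin M =>
          if hx : x ∈ S then p.1 ⟨x, hx⟩ else p.2 ⟨x, by simpa using hx⟩) ↑S := by
      intro p x hx y hy hxy
      simp only [Finset.mem_coe] at hx hy
      simp only [dif_pos hx, dif_pos hy] at hxy
      exact Subtype.ext_iff.mp (p.1.injective hxy)
    apply Fintype.card_le_of_injective (fun p => ⟨_, hinj p⟩)
    rintro ⟨e, g⟩ ⟨e', g'⟩ hpq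
    rw [Subtype.mk_eq_mk] at hpq
    have hfun := congrFun hpq
    simp only [Prod.mk.injEq]
    constructor
    · ext ⟨x, hx⟩
      have := hfun x
      simp only [dif_pos hx] at this
      exact congrArg Fin.val this
    · funext ⟨x, hx⟩
      have hx' : x ∉ S := by simpa using hx
      have := hfun x
      simpa only [dif_neg hx'] using this
  have hcS : Fintype.card ↥S = n := by rw [Fintype.card_coe, hS]
  have hcSc : Fintype.card ↥(Sᶜ) = M - n := by
    rw [Fintype.card_coe, Finset.card_compl, hS, Fintype.card_fin]
  have hprod : Fintype.card ((↥S ↪ Fin (2 * n)) × (↥(Sᶜ) → Fin (2 * n))) =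
      (2 * n).descFactorial n * (2 * n) ^ (M - n) := by
    rw [Fintype.card_prod, Fintype.card_embedding_eq, Fintype.card_fun, Fintype.card_fin,
      hcS, hcSc]
  have hdesc : n ^ n ≤ (2 * n).descFactorial n := by
    rw [Nat.descFactorial_eq_prod_range]
    calc n ^ n = ∏ _i ∈ range n, n := by rw [Finset.prod_const, Finset.card_range]
    _ ≤ ∏ i ∈ range n, (2 * n - i) := by
        apply Finset.prod_le_prod'
        intro i hi
        have := Finset.mem_range.mp hi
        omega
  calc (2 * n) ^ M = (2 * n) ^ n * (2 * n) ^ (M - n) := by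
        rw [← pow_add]; congr 1; omega
  _ = 2 ^ n * (n ^ n * (2 * n) ^ (M - n)) := by rw [mul_pow]; ring
  _ ≤ 2 ^ n * ((2 * n).descFactorial n * (2 * n) ^ (M - n)) := by
        apply Nat.mul_le_mul_left
        exact Nat.mul_le_mul_right _ hdesc
  _ = 2 ^ n * Fintype.card ((↥S ↪ Fin (2 * n)) × (↥(Sᶜ) → Fin (2 * n))) := by rw [hprod]
  _ ≤ _ := Nat.mul_le_mul_left _ hcard

lemma phf_exists {n M : ℕ} (hn : 1 ≤ n) (hnM : n ≤ M) :
    ∃ K : ℕ, K = (2 ^ n - 1) * n * (Nat.log 2 M + 1) ∧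
      ∃ h : Fin K → Fin M → Fin (2 * n),
        ∀ S : Finset (Fin M), S.card = n → ∃ k, Set.InjOn (h k) ↑S := by
  classical
  have hM : 1 ≤ M := le_trans hn hnM
  set K := (2 ^ n - 1) * n * (Nat.log 2 M + 1) with hK
  refine ⟨K, rfl, ?_⟩
  by_contra hcon
  push_neg at hcon
  set T := (2 * n) ^ M with hT
  -- every tuple is bad
  have hcover : (univ : Finset (Fin K → Fin M → Fin (2 * n))) ⊆
      (Finset.powersetCard n (univ : Finset (Fin M))).biUnion
        (fun S => univ.filter (fun ω => ∀ k, ¬ Set.InjOn (ω k) ↑S)) := by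
    intro ω _
    obtain ⟨S, hScard, hSbad⟩ := hcon ω
    apply Finset.mem_biUnion.mpr
    exact ⟨S, Finset.mem_powersetCard.mpr ⟨Finset.subset_univ _, hScard⟩,
      Finset.mem_filter.mpr ⟨Finset.mem_univ _, hSbad⟩⟩
  -- per-S bound
  have hperS : ∀ S : Finset (Fin M), S.card = n →
      2 ^ (n * K) * (univ.filter (fun ω : Fin K → Fin M → Fin (2 * n) =>
        ∀ k, ¬ Set.InjOn (ω k) ↑S)).card ≤ (2 ^ n - 1) ^ K * T ^ K := by
    intro S hScard
    set B := Fintype.card {f : Fin M → Fin (2 * n) // ¬ Set.InjOn f ↑S} with hB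
    have hfilter : (univ.filter (fun ω : Fin K → Fin M → Fin (2 * n) =>
        ∀ k, ¬ Set.InjOn (ω k) ↑S)).card ≤ B ^ K := by
      rw [← Fintype.card_coe]
      have : B ^ K = Fintype.card (Fin K → {f : Fin M → Fin (2 * n) // ¬ Set.InjOn f ↑S}) := by
        rw [Fintype.card_fun, Fintype.card_fin]
      rw [this]
      apply Fintype.card_le_of_injective
        (fun ω k => (⟨ω.1 k, by exact (Finset.mem_filter.mp ω.2).2 k⟩ :
          {f : Fin M → Fin (2 * n) // ¬ Set.InjOn f ↑S}))
      intro ω ω' hee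
      apply Subtype.ext
      funext k
      exact Subtype.ext_iff.mp (congrFun hee k)
    have hBT : 2 ^ n * B ≤ (2 ^ n - 1) * T := by
      have hI := count_injOn hn hnM S hScard
      have hcompl : B = T - Fintype.card {f : Fin M → Fin (2 * n) // Set.InjOn f ↑S} := by
        rw [hB, Fintype.card_subtype_compl, Fintype.card_fun, Fintype.card_fin,
          Fintype.card_fin]
      have hIle : Fintype.card {f : Fin M → Fin (2 * n) // Set.InjOn f ↑S} ≤ T := by
        have := Fintype.card_subtype_le (fun f : Fin M → Fin (2 * n) => Set.InjOn f ↑S)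
        simpa [hT, Fintype.card_fun] using this
      have h2 : 1 ≤ 2 ^ n := Nat.one_le_two_pow
      rw [hcompl]
      set I := Fintype.card {f : Fin M → Fin (2 * n) // Set.InjOn f ↑S}
      calc 2 ^ n * (T - I) = 2 ^ n * T - 2 ^ n * I := Nat.mul_sub ..
      _ ≤ 2 ^ n * T - T := by apply Nat.sub_le_sub_left; exact hI
      _ = (2 ^ n - 1) * T := by rw [Nat.sub_mul, one_mul]
    calc 2 ^ (n * K) * (univ.filter (fun ω : Fin K → Fin M → Fin (2 * n) =>
        ∀ k, ¬ Set.InjOn (ω k) ↑S)).card ≤ 2 ^ (n * K) * B ^ K :=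
          Nat.mul_le_mul_left _ hfilter
    _ = (2 ^ n * B) ^ K := by rw [mul_pow, ← pow_mul]
    _ ≤ ((2 ^ n - 1) * T) ^ K := Nat.pow_le_pow_left hBT K
    _ = (2 ^ n - 1) ^ K * T ^ K := mul_pow _ _ _
  -- total count
  have htot : Fintype.card (Fin K → Fin M → Fin (2 * n)) = T ^ K := by
    simp [Fintype.card_fun, hT]
  have hTK : T ^ K ≤ ((Finset.powersetCard n (univ : Finset (Fin M))).biUnion
      (fun S => univ.filter (fun ω : Fin K → Fin M → Fin (2 * n) =>
        ∀ k, ¬ Set.InjOn (ω k) ↑S))).card := by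
    rw [← htot, ← Finset.card_univ]
    exact Finset.card_le_card hcover
  have hsum : ((Finset.powersetCard n (univ : Finset (Fin M))).biUnion
      (fun S => univ.filter (fun ω : Fin K → Fin M → Fin (2 * n) =>
        ∀ k, ¬ Set.InjOn (ω k) ↑S))).card * 2 ^ (n * K) ≤
      M ^ n * ((2 ^ n - 1) ^ K * T ^ K) := by
    calc _ ≤ (∑ S ∈ Finset.powersetCard n (univ : Finset (Fin M)),
          (univ.filter (fun ω : Fin K → Fin M → Fin (2 * n) =>
            ∀ k, ¬ Set.InjOn (ω k) ↑S)).card) * 2 ^ (n * K) :=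
          Nat.mul_le_mul_right _ (Finset.card_biUnion_le)
    _ = ∑ S ∈ Finset.powersetCard n (univ : Finset (Fin M)),
          2 ^ (n * K) * (univ.filter (fun ω : Fin K → Fin M → Fin (2 * n) =>
            ∀ k, ¬ Set.InjOn (ω k) ↑S)).card := by
          rw [Finset.sum_mul]; apply Finset.sum_congr rfl; intros; ring
    _ ≤ ∑ _S ∈ Finset.powersetCard n (univ : Finset (Fin M)),
          (2 ^ n - 1) ^ K * T ^ K := by
          apply Finset.sum_le_sum
          intro S hSmem
          exact hperS S (Finset.mem_powersetCard.mp hSmem).2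
    _ = (Finset.powersetCard n (univ : Finset (Fin M))).card * ((2 ^ n - 1) ^ K * T ^ K) := by
          rw [Finset.sum_const, smul_eq_mul]
    _ ≤ M ^ n * ((2 ^ n - 1) ^ K * T ^ K) := by
          have hch : (Finset.powersetCard n (univ : Finset (Fin M))).card ≤ M ^ n := by
            rw [Finset.card_powersetCard, Finset.card_univ, Fintype.card_fin]
            exact Nat.choose_le_pow M n
          exact Nat.mul_le_mul_right _ hch
  have hTpos : 0 < T ^ K := pow_pos (pow_pos (Nat.mul_pos two_pos hn) M) K
  have h1 : T ^ K * 2 ^ (n * K) ≤ M ^ n * ((2 ^ n - 1) ^ K * T ^ K) :=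
    le_trans (Nat.mul_le_mul_right _ hTK) hsum
  have h2 : M ^ n * ((2 ^ n - 1) ^ K * T ^ K) < T ^ K * 2 ^ (n * K) := by
    calc M ^ n * ((2 ^ n - 1) ^ K * T ^ K) = (M ^ n * (2 ^ n - 1) ^ K) * T ^ K := by ring
    _ < 2 ^ (n * K) * T ^ K := Nat.mul_lt_mul_of_lt_of_le (key_ineq hn hM) (le_refl _) hTpos
    _ = T ^ K * 2 ^ (n * K) := by ring
  exact absurd (lt_of_le_of_lt h1 h2) (lt_irrefl _)

/-- Global certification of the existence of a homomorphism to a fixed graph `H` on `n'`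
vertices, with certificates of size `O(n · log n' + log log M)`. -/
theorem global_certification_homomorphism :
    ∃ c₀ : ℝ, 0 < c₀ ∧
      ∀ (n' n M : ℕ) (H : SimpleGraph (Fin n')), 1 ≤ n' → 1 ≤ n → n ≤ M → 4 ≤ M →
        ∃ (C : Type) (instC : Fintype C) (A : Fin M → Finset (Fin M) → C → Bool),
          (@Fintype.card C instC : ℝ) ≤
            2 ^ (c₀ * ((n : ℝ) * Real.logb 2 ((n' : ℝ) + 1) +
              Real.logb 2 (Real.logb 2 (M : ℝ)) + 1)) ∧
          ∀ (V : Type) [Fintype V] [DecidableEq V] (G : SimpleGraph V) [DecidableRel G.Adj],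
            Fintype.card V = n →
            ∀ Id : V → Fin M, Function.Injective Id →
              ((∃ c : C, ∀ u : V, A (Id u) ((G.neighborFinset u).image Id) c = true) ↔
                Nonempty (G →g H)) := by
  classical
  refine ⟨4, by norm_num, ?_⟩
  intro n' n M H hn' hn hnM hM4
  obtain ⟨K, hKeq, h, hphf⟩ := phf_exists hn hnM
  refine ⟨Fin K × (Fin (2 * n) → Fin n'), inferInstance,
    fun id S c => decide (∀ t ∈ S, H.Adj (c.2 (h c.1 id)) (c.2 (h c.1 t))), ?_, ?_⟩
  · -- cardinality bound
    have hcC : Fintype.card (Fin K × (Fin (2 * n) → Fin n')) = K * n' ^ (2 * n) := by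
      simp [Fintype.card_fun]
    rw [hcC]
    -- ℕ bound on K
    have hlog2 : 2 ≤ Nat.log 2 M := by
      rw [Nat.le_log_iff_pow_le (by norm_num) (by omega)]
      exact hM4
    have hKle : K ≤ 2 ^ (2 * n + 1) * Nat.log 2 M := by
      rw [hKeq]
      have h1 : 2 ^ n - 1 ≤ 2 ^ n := Nat.sub_le _ _
      have h2 : n ≤ 2 ^ n := (Nat.lt_two_pow_self (n := n)).le
      have h3 : Nat.log 2 M + 1 ≤ 2 * Nat.log 2 M := by omega
      have h4 : (2 ^ n - 1) * n * (Nat.log 2 M + 1) ≤ 2 ^ n * 2 ^ n * (2 * Nat.log 2 M) :=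
        Nat.mul_le_mul (Nat.mul_le_mul h1 h2) h3
      have h5 : 2 ^ n * 2 ^ n * (2 * Nat.log 2 M) = 2 ^ (2 * n + 1) * Nat.log 2 M := by
        rw [show 2 * n + 1 = n + n + 1 by ring, pow_succ, pow_add]; ring
      omega
    -- real facts
    have h2pos : (0:ℝ) < 2 := by norm_num
    have hM4R : (4:ℝ) ≤ (M:ℝ) := by exact_mod_cast hM4
    have hlogbM : (2:ℝ) ≤ Real.logb 2 M := by
      have h4 : Real.logb 2 4 = 2 := by
        rw [show (4:ℝ) = 2 ^ (2:ℝ) by norm_num [Real.rpow_natCast]]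
        exact Real.logb_rpow (by norm_num) (by norm_num)
      calc (2:ℝ) = Real.logb 2 4 := h4.symm
      _ ≤ Real.logb 2 M := Real.logb_le_logb_of_le (by norm_num) (by norm_num) hM4R
    have hlogbMpos : (0:ℝ) < Real.logb 2 M := by linarith
    have hllM : (0:ℝ) ≤ Real.logb 2 (Real.logb 2 M) := by
      apply Real.logb_nonneg (by norm_num)
      linarith
    have hn'R : (2:ℝ) ≤ (n':ℝ) + 1 := by
      have : (1:ℝ) ≤ (n':ℝ) := by exact_mod_cast hn'
      linarith
    have hL' : (1:ℝ) ≤ Real.logb 2 ((n':ℝ) + 1) := by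
      calc (1:ℝ) = Real.logb 2 2 := (Real.logb_self_eq_one (b := 2) (by norm_num)).symm
      _ ≤ Real.logb 2 ((n':ℝ) + 1) := Real.logb_le_logb_of_le (by norm_num) (by norm_num) hn'R
    -- main estimate
    have hnR : (1:ℝ) ≤ (n:ℝ) := by exact_mod_cast hn
    set E : ℝ := (2 * (n:ℝ) + 1) + Real.logb 2 (Real.logb 2 M) +
      2 * (n:ℝ) * Real.logb 2 ((n':ℝ) + 1) with hE
    have key : ((K * n' ^ (2 * n) : ℕ) : ℝ) ≤ 2 ^ E := by
      have e1 : (2:ℝ) ^ E = (2 ^ ((2 * (n:ℝ) + 1)) * 2 ^ (Real.logb 2 (Real.logb 2 M))) *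
          2 ^ (2 * (n:ℝ) * Real.logb 2 ((n':ℝ) + 1)) := by
        rw [hE, Real.rpow_add h2pos, Real.rpow_add h2pos]
      rw [e1]
      push_cast
      have f1 : (K:ℝ) ≤ 2 ^ ((2 * (n:ℝ) + 1)) * 2 ^ (Real.logb 2 (Real.logb 2 M)) := by
        have c1 : (K:ℝ) ≤ 2 ^ (2 * n + 1) * (Nat.log 2 M : ℝ) := by exact_mod_cast hKle
        have c2 : (Nat.log 2 M : ℝ) ≤ Real.logb 2 M := Real.natLog_le_logb M 2
        have c3 : (2:ℝ) ^ (Real.logb 2 (Real.logb 2 M)) = Real.logb 2 M :=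
          Real.rpow_logb h2pos (by norm_num) hlogbMpos
        have c4 : ((2:ℝ) ^ (2 * n + 1 : ℕ)) = 2 ^ ((2 * (n:ℝ) + 1)) := by
          rw [show (2 * (n:ℝ) + 1) = ((2 * n + 1 : ℕ) : ℝ) by push_cast; ring,
            Real.rpow_natCast]
        calc (K:ℝ) ≤ 2 ^ (2 * n + 1 : ℕ) * (Nat.log 2 M : ℝ) := c1
        _ ≤ 2 ^ (2 * n + 1 : ℕ) * Real.logb 2 M := by
            apply mul_le_mul_of_nonneg_left c2 (by positivity)
        _ = 2 ^ ((2 * (n:ℝ) + 1)) * 2 ^ (Real.logb 2 (Real.logb 2 M)) := by rw [c3, c4]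
      have f2 : ((n':ℝ)) ^ (2 * n) ≤ 2 ^ (2 * (n:ℝ) * Real.logb 2 ((n':ℝ) + 1)) := by
        have d1 : ((n':ℝ)) ^ (2 * n) ≤ ((n':ℝ) + 1) ^ (2 * n) := by
          apply pow_le_pow_left₀ (by positivity)
          linarith
        have d2 : (2:ℝ) ^ (2 * (n:ℝ) * Real.logb 2 ((n':ℝ) + 1)) = ((n':ℝ) + 1) ^ (2 * n) := by
          rw [mul_comm (2 * (n:ℝ)) _, Real.rpow_mul (le_of_lt h2pos),
            Real.rpow_logb h2pos (by norm_num) (by linarith : (0:ℝ) < (n':ℝ) + 1),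
            show (2 * (n:ℝ)) = ((2 * n : ℕ) : ℝ) by push_cast; ring, Real.rpow_natCast]
        linarith
      have hnn1 : (0:ℝ) ≤ (K:ℝ) := by positivity
      have hnn2 : (0:ℝ) ≤ ((n':ℝ)) ^ (2 * n) := by positivity
      calc (K:ℝ) * ((n':ℝ)) ^ (2 * n) ≤
          (2 ^ ((2 * (n:ℝ) + 1)) * 2 ^ (Real.logb 2 (Real.logb 2 M))) *
            (2 ^ (2 * (n:ℝ) * Real.logb 2 ((n':ℝ) + 1))) := by
            apply mul_le_mul f1 f2 hnn2 (by positivity)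
      _ = _ := rfl
    calc ((K * n' ^ (2 * n) : ℕ) : ℝ) ≤ 2 ^ E := key
    _ ≤ 2 ^ ((4:ℝ) * ((n : ℝ) * Real.logb 2 ((n' : ℝ) + 1) +
          Real.logb 2 (Real.logb 2 (M : ℝ)) + 1)) := by
        apply Real.rpow_le_rpow_of_exponent_le (by norm_num)
        rw [hE]
        nlinarith [mul_le_mul_of_nonneg_left hL' (by linarith : (0:ℝ) ≤ 2 * (n:ℝ))]
  · -- correctness
    intro V _ _ G _ hcard Id hId
    constructor
    · rintro ⟨⟨k, ψ⟩, hc⟩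
      refine ⟨⟨fun v => ψ (h k (Id v)), ?_⟩⟩
      intro a b hab
      have := hc a
      rw [decide_eq_true_eq] at this
      exact this (Id b) (Finset.mem_image_of_mem _ ((G.mem_neighborFinset a b).mpr hab))
    · rintro ⟨φ⟩
      have hScard : (Finset.univ.image Id).card = n := by
        rw [Finset.card_image_of_injective _ hId, Finset.card_univ, hcard]
      obtain ⟨k, hk⟩ := hphf (Finset.univ.image Id) hScard
      set g : V → Fin (2 * n) := fun v => h k (Id v) with hg
      have hgInj : Function.Injective g := by
        intro a b hab
        apply hId
        apply hk _ _ hab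
        · exact Finset.mem_coe.mpr (Finset.mem_image_of_mem _ (Finset.mem_univ a))
        · exact Finset.mem_coe.mpr (Finset.mem_image_of_mem _ (Finset.mem_univ b))
      set ψ : Fin (2 * n) → Fin n' := fun y =>
        if hy : ∃ v, g v = y then φ (Classical.choose hy) else ⟨0, by omega⟩ with hψ
      have hψg : ∀ v, ψ (g v) = φ v := by
        intro v
        rw [hψ]
        have hex : ∃ w, g w = g v := ⟨v, rfl⟩
        simp only [dif_pos hex]
        exact congrArg φ (hgInj (Classical.choose_spec hex))
      refine ⟨(k, ψ), fun u => ?_⟩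
      rw [decide_eq_true_eq]
      intro t ht
      obtain ⟨v, hv, rfl⟩ := Finset.mem_image.mp ht
      show H.Adj (ψ (g u)) (ψ (g v))
      rw [hψg, hψg]
      exact φ.map_adj ((G.mem_neighborFinset u v).mp hv)
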